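/- Let A = ℂ[u,v,x_1,...,x_n]/(uv − f(x_1,...,x_n)) where f is a non-constant polynomial, and let 𝔪 be any maximal ideal of A. Then [A/𝔪] = 0 in the Grothendieck group G_0(A). -/

import Mathlib

universe u v

/-! ### The Grothendieck group `G₀` of finitely generated modules -/

/-- A bundled finitely generated module over the commutative ring `R`. -/
structure FGMod (R : Type u) [CommRing R] : Type (u + 1) where
  carrier : Type u
  [isAddCommGroup : AddCommGroup carrier]
  [isModule : Module R carrier]
  [isFinite : Module.Finite R carrier]

attribute [instance] FGMod.isAddCommGroup FGMod.isModule FGMod.isFinite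

/-- The bundled finitely generated module attached to a module. -/
def FGMod.of (R : Type u) [CommRing R] (M : Type u) [AddCommGroup M] [Module R M]
    [Module.Finite R M] : FGMod R :=
  ⟨M⟩

/-- The subgroup of relations coming from short exact sequences
`0 → A → B → C → 0` of finitely generated `R`-modules. -/
def G0Rels (R : Type u) [CommRing R] : AddSubgroup (FreeAbelianGroup (FGMod R)) :=
  AddSubgroup.closure
    { x | ∃ (A B C : FGMod R) (f : A.carrier →ₗ[R] B.carrier) (g : B.carrier →ₗ[R] C.carrier),
        Function.Injective f ∧ Function.Surjective g ∧ LinearMap.range f = LinearMap.ker g ∧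
        x = FreeAbelianGroup.of B - FreeAbelianGroup.of A - FreeAbelianGroup.of C }

/-- The Grothendieck group `G₀(R) = K₀(mod R)` of finitely generated `R`-modules:
the free abelian group on (finitely generated) modules modulo the relation
`[B] = [A] + [C]` for every short exact sequence `0 → A → B → C → 0`. -/
def G0 (R : Type u) [CommRing R] : Type (u + 1) :=
  FreeAbelianGroup (FGMod R) ⧸ G0Rels R

noncomputable instance (R : Type u) [CommRing R] : AddCommGroup (G0 R) :=
  inferInstanceAs (AddCommGroup (FreeAbelianGroup (FGMod R) ⧸ G0Rels R))

/-- The class `[M]` of a finitely generated module in the Grothendieck group `G₀(R)`. -/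
def G0.mk {R : Type u} [CommRing R] (M : FGMod R) : G0 R :=
  QuotientAddGroup.mk (FreeAbelianGroup.of M)

/-- In a module over a noetherian ring, every submodule of a finitely generated module is
finitely generated. -/
instance (R : Type u) [CommRing R] [IsNoetherianRing R] (M : Type u) [AddCommGroup M]
    [Module R M] [Module.Finite R M] (N : Submodule R M) : Module.Finite R ↥N := by
  haveI : IsNoetherian R M := isNoetherian_of_isNoetherianRing_of_finite R M
  exact Module.Finite.iff_fg.mpr (IsNoetherian.noetherian N)

open MvPolynomial

/-- The ideal `(uv - f(x₁,…,xₙ))` of the polynomial ring `ℂ[u,v,x₁,…,xₙ]`. -/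
noncomputable def hyperIdealF (n : ℕ) (f : MvPolynomial (Fin n) ℂ) :
    Ideal (MvPolynomial (Fin 2 ⊕ Fin n) ℂ) :=
  Ideal.span {X (Sum.inl 0) * X (Sum.inl 1) - rename Sum.inr f}

/-- The hypersurface ring `A = ℂ[u,v,x₁,…,xₙ]/(uv - f(x₁,…,xₙ))`. -/
abbrev HyperRingF (n : ℕ) (f : MvPolynomial (Fin n) ℂ) : Type :=
  MvPolynomial (Fin 2 ⊕ Fin n) ℂ ⧸ hyperIdealF n f

/-! ### Auxiliary lemmas for `G₀` -/

section G0Aux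

variable {R : Type u} [CommRing R]

lemma G0.mk_rel {A B C : FGMod R} (f : A.carrier →ₗ[R] B.carrier)
    (g : B.carrier →ₗ[R] C.carrier) (hf : Function.Injective f) (hg : Function.Surjective g)
    (hfg : LinearMap.range f = LinearMap.ker g) : G0.mk B = G0.mk A + G0.mk C := by
  have h : FreeAbelianGroup.of B - FreeAbelianGroup.of A - FreeAbelianGroup.of C ∈ G0Rels R :=
    AddSubgroup.subset_closure ⟨A, B, C, f, g, hf, hg, hfg, rfl⟩
  have h2 : -(FreeAbelianGroup.of B) + (FreeAbelianGroup.of A + FreeAbelianGroup.of C)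
      ∈ G0Rels R := by
    have e : -(FreeAbelianGroup.of B) + (FreeAbelianGroup.of A + FreeAbelianGroup.of C)
        = -(FreeAbelianGroup.of B - FreeAbelianGroup.of A - FreeAbelianGroup.of C) := by abel
    rw [e]; exact neg_mem h
  show QuotientAddGroup.mk _ = QuotientAddGroup.mk _ + QuotientAddGroup.mk _
  have : (QuotientAddGroup.mk (FreeAbelianGroup.of A) : G0 R) + QuotientAddGroup.mk
      (FreeAbelianGroup.of C) = QuotientAddGroup.mk (FreeAbelianGroup.of A +
      FreeAbelianGroup.of C) := rfl
  refine Eq.trans ?_ this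
  exact (QuotientAddGroup.eq (s := G0Rels R)).2 h2

/-- If `𝔭` is prime, `y ∉ 𝔭`, and `𝔭 ⊔ (y) = 𝔪`, then `[R/𝔪] = 0` in `G₀(R)`. -/
lemma g0_quot_vanish (p m : Ideal R) (hp : p.IsPrime) (y : R) (hy : y ∉ p)
    (hpm : p ⊔ Ideal.span {y} = m) :
    G0.mk (FGMod.of R (R ⧸ m)) = 0 := by
  have hpm' : p ≤ m := hpm ▸ le_sup_left
  -- the three modules
  let A : FGMod R := FGMod.of R (R ⧸ p)
  let C : FGMod R := FGMod.of R (R ⧸ m)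
  -- multiplication by y on R/p
  let F : (R ⧸ p) →ₗ[R] (R ⧸ p) := LinearMap.lsmul R (R ⧸ p) y
  -- projection R/p → R/m
  let G : (R ⧸ p) →ₗ[R] (R ⧸ m) :=
    Submodule.mapQ (p : Submodule R R) (m : Submodule R R) LinearMap.id hpm'
  have hGmk : ∀ r : R, G (Submodule.Quotient.mk r) = Submodule.Quotient.mk r := by
    intro r
    rfl
  have hFinj : Function.Injective F := by
    refine (injective_iff_map_eq_zero F).2 ?_
    intro x hx
    obtain ⟨r, rfl⟩ := Submodule.Quotient.mk_surjective _ x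
    have hx' : (Submodule.Quotient.mk (y * r) : R ⧸ p) = 0 := by
      rw [show y * r = y • r from rfl, Submodule.Quotient.mk_smul]
      exact hx
    rw [Submodule.Quotient.mk_eq_zero] at hx'
    rcases hp.mem_or_mem hx' with h | h
    · exact absurd h hy
    · rw [Submodule.Quotient.mk_eq_zero]; exact h
  have hGsurj : Function.Surjective G := by
    intro z
    obtain ⟨r, rfl⟩ := Submodule.Quotient.mk_surjective _ z
    exact ⟨Submodule.Quotient.mk r, hGmk r⟩
  have hrange : LinearMap.range F = LinearMap.ker G := by
    ext x
    obtain ⟨r, rfl⟩ := Submodule.Quotient.mk_surjective _ x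
    constructor
    · rintro ⟨z, hz⟩
      obtain ⟨s, rfl⟩ := Submodule.Quotient.mk_surjective _ z
      have : F (Submodule.Quotient.mk s) = Submodule.Quotient.mk (y * s) := by
        rw [show y * s = y • s from rfl, Submodule.Quotient.mk_smul]; rfl
      rw [this] at hz
      rw [LinearMap.mem_ker, hGmk, Submodule.Quotient.mk_eq_zero]
      have hys : y * s ∈ m := by
        rw [← hpm]
        exact Submodule.mem_sup_right (Ideal.mem_span_singleton.2 ⟨s, rfl⟩)
      have hd : y * s - r ∈ p := (Submodule.Quotient.eq (p : Submodule R R)).1 hz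
      have hr : y * s - (y * s - r) ∈ m := m.sub_mem hys (hpm' hd)
      simpa using hr
    · intro hker
      rw [LinearMap.mem_ker, hGmk, Submodule.Quotient.mk_eq_zero, ← hpm] at hker
      obtain ⟨q, hq, z, hz, rfl⟩ := Submodule.mem_sup.1 hker
      obtain ⟨s, rfl⟩ := Ideal.mem_span_singleton'.1 hz
      refine ⟨Submodule.Quotient.mk s, ?_⟩
      have : F (Submodule.Quotient.mk s) = Submodule.Quotient.mk (y * s) := by
        rw [show y * s = y • s from rfl, Submodule.Quotient.mk_smul]; rfl
      rw [this]
      rw [show (Submodule.Quotient.mk (q + s * y) : R ⧸ p)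
          = Submodule.Quotient.mk q + Submodule.Quotient.mk (s * y) from rfl]
      rw [(Submodule.Quotient.mk_eq_zero _).2 hq, zero_add, mul_comm]
  have key := G0.mk_rel (A := A) (B := A) (C := C) F G hFinj hGsurj hrange
  exact left_eq_add.1 key

end G0Aux

/-! ### Auxiliary lemmas on polynomial evaluation -/

section PolyAux

open MvPolynomial

lemma polyEval_aeval {σ : Type} (w : σ → Polynomial ℂ) (z : ℂ) (g : MvPolynomial σ ℂ) :
    (MvPolynomial.aeval w g).eval z = MvPolynomial.eval (fun j => (w j).eval z) g := by
  induction g using MvPolynomial.induction_on with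
  | C => simp
  | add q r hq hr => simp [hq, hr]
  | mul_X q i hq => simp [hq]

lemma aeval_polyC {σ : Type} (c : σ → ℂ) (g : MvPolynomial σ ℂ) :
    MvPolynomial.aeval (fun j => Polynomial.C (c j)) g = Polynomial.C (MvPolynomial.eval c g) := by
  induction g using MvPolynomial.induction_on with
  | C => simp
  | add q r hq hr => simp [hq, hr]
  | mul_X q i hq => simp [hq]

end PolyAux

section HyperMain

open MvPolynomial

/-- Master lemma: a polynomial curve through the point of `𝔪` yields the vanishing. -/
lemma hyper_main (n : ℕ) (f : MvPolynomial (Fin n) ℂ)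
    (m : Ideal (HyperRingF n f))
    (p : Fin 2 ⊕ Fin n → ℂ)
    (hMp : m.comap (Ideal.Quotient.mk (hyperIdealF n f)) = vanishingIdeal ℂ {p})
    (w : Fin 2 ⊕ Fin n → Polynomial ℂ)
    (h1 : aeval w ((X (Sum.inl 0) * X (Sum.inl 1) - rename Sum.inr f :
        MvPolynomial (Fin 2 ⊕ Fin n) ℂ)) = 0)
    (h2 : ∀ i, (w i).eval 0 = p i)
    (y₀ : MvPolynomial (Fin 2 ⊕ Fin n) ℂ) (h3 : aeval w y₀ = Polynomial.X) :
    G0.mk (FGMod.of (HyperRingF n f) (HyperRingF n f ⧸ m)) = 0 := by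
  -- the ring map Φ : P →+* ℂ[X]
  let Φ : MvPolynomial (Fin 2 ⊕ Fin n) ℂ →+* Polynomial ℂ :=
    (aeval w : MvPolynomial (Fin 2 ⊕ Fin n) ℂ →ₐ[ℂ] Polynomial ℂ).toRingHom
  have hΦker : ∀ a ∈ hyperIdealF n f, Φ a = 0 := by
    intro a ha
    rw [hyperIdealF, Ideal.mem_span_singleton] at ha
    obtain ⟨d, rfl⟩ := ha
    show aeval w _ = 0
    rw [map_mul, h1, zero_mul]
  -- the descended map φ : A →+* ℂ[X]
  let φ : HyperRingF n f →+* Polynomial ℂ := Ideal.Quotient.lift (hyperIdealF n f) Φ hΦker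
  have hφmk : ∀ g : MvPolynomial (Fin 2 ⊕ Fin n) ℂ,
      φ (Ideal.Quotient.mk (hyperIdealF n f) g) = Φ g := fun g => Ideal.Quotient.lift_mk _ _ _
  have hΦsurj : Function.Surjective Φ := by
    intro q
    refine ⟨Polynomial.aeval y₀ q, ?_⟩
    show (aeval w) (Polynomial.aeval y₀ q) = q
    rw [← Polynomial.aeval_algHom_apply (aeval w) y₀ q, h3, Polynomial.aeval_X_left_apply]
  have hφsurj : Function.Surjective φ := by
    intro q
    obtain ⟨g, hg⟩ := hΦsurj q
    exact ⟨Ideal.Quotient.mk (hyperIdealF n f) g, by rw [hφmk, hg]⟩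
  -- evaluation at 0 agrees with evaluation at the point p
  have hev0 : ∀ g : MvPolynomial (Fin 2 ⊕ Fin n) ℂ, (Φ g).eval 0 = eval p g := by
    intro g
    show (aeval w g).eval 0 = _
    rw [polyEval_aeval]
    have he : (fun j => (w j).eval 0) = p := funext h2
    rw [he]
  -- the prime ideal
  have hprime : (RingHom.ker φ).IsPrime := RingHom.ker_isPrime φ
  have hφy : φ (Ideal.Quotient.mk (hyperIdealF n f) y₀) = Polynomial.X := by
    rw [hφmk y₀]; exact h3
  have hy : Ideal.Quotient.mk (hyperIdealF n f) y₀ ∉ RingHom.ker φ := by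
    rw [RingHom.mem_ker, hφy]
    exact Polynomial.X_ne_zero
  -- identification of 𝔪
  have hMcomap : m = Ideal.comap φ (Ideal.span {Polynomial.X}) := by
    apply Ideal.comap_injective_of_surjective (f := Ideal.Quotient.mk (hyperIdealF n f))
      Ideal.Quotient.mk_surjective
    rw [hMp, Ideal.comap_comap]
    ext g
    rw [Ideal.mem_comap, show (φ.comp (Ideal.Quotient.mk (hyperIdealF n f))) g = Φ g from hφmk g,
      Ideal.mem_span_singleton, mem_vanishingIdeal_singleton_iff, (show ∀ q : MvPolynomial (Fin 2 ⊕ Fin n) ℂ, aeval p q = eval p q from fun _ => rfl), ← hev0 g,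
      ← Polynomial.coeff_zero_eq_eval_zero]
    exact Polynomial.X_dvd_iff.symm
  have hkey : RingHom.ker φ ⊔ Ideal.span {Ideal.Quotient.mk (hyperIdealF n f) y₀} = m := by
    have h4 : Ideal.map φ (Ideal.span {Ideal.Quotient.mk (hyperIdealF n f) y₀})
        = Ideal.span {Polynomial.X} := by
      rw [Ideal.map_span, Set.image_singleton, hφy]
    have h5 : Ideal.comap φ (Ideal.map φ (Ideal.span {Ideal.Quotient.mk (hyperIdealF n f) y₀}))
        = Ideal.span {Ideal.Quotient.mk (hyperIdealF n f) y₀} ⊔ RingHom.ker φ := by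
      rw [Ideal.comap_map_of_surjective φ hφsurj, ← RingHom.ker_eq_comap_bot]
    rw [hMcomap, ← h4, h5, sup_comm]
  exact g0_quot_vanish _ m hprime _ hy hkey

end HyperMain

open MvPolynomial

/-- **Residue fields vanish in the Grothendieck group.**
Let `A = ℂ[u,v,x₁,…,xₙ]/(uv - f(x₁,…,xₙ))` where `f` is a non-constant polynomial, and
let `𝔪` be any maximal ideal of `A`.  Then `[A/𝔪] = 0` in the Grothendieck group
`G₀(A)`. -/
theorem g0_class_residue_field_vanishes (n : ℕ) (f : MvPolynomial (Fin n) ℂ)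
    (hf : ∀ c : ℂ, f ≠ C c) (m : Ideal (HyperRingF n f)) (hm : m.IsMaximal) :
    G0.mk (FGMod.of (HyperRingF n f) (HyperRingF n f ⧸ m)) = 0 := by
  classical
  -- the preimage of `m` in the polynomial ring is maximal, hence a point ideal
  haveI hM : (m.comap (Ideal.Quotient.mk (hyperIdealF n f))).IsMaximal :=
    Ideal.comap_isMaximal_of_surjective _ Ideal.Quotient.mk_surjective
  obtain ⟨p, hp⟩ := isMaximal_iff_eq_vanishingIdeal_singleton.1 hM
  have hgen : (X (Sum.inl 0) * X (Sum.inl 1) - rename Sum.inr f :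
      MvPolynomial (Fin 2 ⊕ Fin n) ℂ) ∈ m.comap (Ideal.Quotient.mk (hyperIdealF n f)) := by
    have h0 : Ideal.Quotient.mk (hyperIdealF n f)
        (X (Sum.inl 0) * X (Sum.inl 1) - rename Sum.inr f) = 0 :=
      Ideal.Quotient.eq_zero_iff_mem.2 (Ideal.subset_span rfl)
    rw [Ideal.mem_comap, h0]
    exact m.zero_mem
  have hab : p (Sum.inl 0) * p (Sum.inl 1) = eval (fun j => p (Sum.inr j)) f := by
    rw [hp, mem_vanishingIdeal_singleton_iff, (show ∀ q : MvPolynomial (Fin 2 ⊕ Fin n) ℂ, aeval p q = eval p q from fun _ => rfl), map_sub, map_mul, eval_X, eval_X,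
      eval_rename, sub_eq_zero] at hgen
    exact hgen
  -- there is at least one `x`-variable
  have hn : 0 < n := by
    rcases Nat.eq_zero_or_pos n with h0 | h0
    · exfalso
      subst h0
      exact hf _ (eq_C_of_isEmpty f)
    · exact h0
  set j₀ : Fin n := ⟨0, hn⟩ with hj₀
  by_cases ha : p (Sum.inl 0) = 0
  · by_cases hb : p (Sum.inl 1) = 0
    · -- case a = 0, b = 0 : the curve (t, 0, c)
      have habc : eval (fun j => p (Sum.inr j)) f = 0 := by rw [← hab, ha, zero_mul]
      refine hyper_main n f m p hp
        (Sum.elim ![Polynomial.X, 0] (fun j => Polynomial.C (p (Sum.inr j)))) ?_ ?_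
        (X (Sum.inl 0)) ?_
      · rw [map_sub, map_mul, aeval_X, aeval_X, aeval_rename, Sum.elim_comp_inr]
        rw [show (MvPolynomial.aeval fun j => Polynomial.C (p (Sum.inr j))) f
            = Polynomial.C (eval (fun j => p (Sum.inr j)) f) from aeval_polyC _ f]
        simp [habc]
      · rintro (k | j)
        · fin_cases k
          · show Polynomial.eval 0 Polynomial.X = p (Sum.inl 0)
            rw [Polynomial.eval_X, ha]
          · show Polynomial.eval 0 (0 : Polynomial ℂ) = p (Sum.inl 1)
            rw [Polynomial.eval_zero, hb]
        · show Polynomial.eval 0 (Polynomial.C (p (Sum.inr j))) = p (Sum.inr j)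
          simp
      · rw [aeval_X]
        rfl
    · -- case a = 0, b ≠ 0 : the curve (f(c + t e)/b, b, c + t e)
      set wr : Fin n → Polynomial ℂ :=
        fun j => Polynomial.C (p (Sum.inr j)) + if j = j₀ then Polynomial.X else 0 with hwr
      have hwr0 : ∀ j, (wr j).eval 0 = p (Sum.inr j) := by
        intro j
        show Polynomial.eval 0 (Polynomial.C (p (Sum.inr j))
          + if j = j₀ then Polynomial.X else 0) = p (Sum.inr j)
        split <;> simp
      set G : Polynomial ℂ := MvPolynomial.aeval wr f with hG
      have hG0 : G.eval 0 = eval (fun j => p (Sum.inr j)) f := by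
        rw [hG, polyEval_aeval]
        exact congrArg (fun w => eval w f) (funext hwr0)
      refine hyper_main n f m p hp
        (Sum.elim ![Polynomial.C (p (Sum.inl 1))⁻¹ * G, Polynomial.C (p (Sum.inl 1))] wr) ?_ ?_
        (X (Sum.inr j₀) - C (p (Sum.inr j₀))) ?_
      · rw [map_sub, map_mul, aeval_X, aeval_X, aeval_rename, Sum.elim_comp_inr]
        show Polynomial.C (p (Sum.inl 1))⁻¹ * G * Polynomial.C (p (Sum.inl 1))
          - MvPolynomial.aeval wr f = 0
        rw [mul_comm, ← mul_assoc, ← Polynomial.C_mul, mul_inv_cancel₀ hb, Polynomial.C_1,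
          one_mul, ← hG, sub_self]
      · rintro (k | j)
        · fin_cases k
          · show Polynomial.eval 0 (Polynomial.C (p (Sum.inl 1))⁻¹ * G) = p (Sum.inl 0)
            rw [Polynomial.eval_mul, Polynomial.eval_C, hG0, ← hab, ha, zero_mul, mul_zero]
          · show Polynomial.eval 0 (Polynomial.C (p (Sum.inl 1))) = p (Sum.inl 1)
            simp
        · exact hwr0 j
      · rw [map_sub, aeval_X, Sum.elim_inr, aeval_C]
        show (Polynomial.C (p (Sum.inr j₀)) + if j₀ = j₀ then Polynomial.X else 0)
          - algebraMap ℂ (Polynomial ℂ) (p (Sum.inr j₀)) = Polynomial.X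
        rw [if_pos rfl, Polynomial.algebraMap_eq, add_sub_cancel_left]
  · -- case a ≠ 0 : the curve (a, f(c + t e)/a, c + t e)
    set wr : Fin n → Polynomial ℂ :=
      fun j => Polynomial.C (p (Sum.inr j)) + if j = j₀ then Polynomial.X else 0 with hwr
    have hwr0 : ∀ j, (wr j).eval 0 = p (Sum.inr j) := by
      intro j
      show Polynomial.eval 0 (Polynomial.C (p (Sum.inr j))
        + if j = j₀ then Polynomial.X else 0) = p (Sum.inr j)
      split <;> simp
    set G : Polynomial ℂ := MvPolynomial.aeval wr f with hG
    have hG0 : G.eval 0 = eval (fun j => p (Sum.inr j)) f := by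
      rw [hG, polyEval_aeval]
      exact congrArg (fun w => eval w f) (funext hwr0)
    refine hyper_main n f m p hp
      (Sum.elim ![Polynomial.C (p (Sum.inl 0)), Polynomial.C (p (Sum.inl 0))⁻¹ * G] wr) ?_ ?_
      (X (Sum.inr j₀) - C (p (Sum.inr j₀))) ?_
    · rw [map_sub, map_mul, aeval_X, aeval_X, aeval_rename, Sum.elim_comp_inr]
      show Polynomial.C (p (Sum.inl 0)) * (Polynomial.C (p (Sum.inl 0))⁻¹ * G)
        - MvPolynomial.aeval wr f = 0
      rw [← mul_assoc, ← Polynomial.C_mul, mul_inv_cancel₀ ha, Polynomial.C_1,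
        one_mul, ← hG, sub_self]
    · rintro (k | j)
      · fin_cases k
        · show Polynomial.eval 0 (Polynomial.C (p (Sum.inl 0))) = p (Sum.inl 0)
          simp
        · show Polynomial.eval 0 (Polynomial.C (p (Sum.inl 0))⁻¹ * G) = p (Sum.inl 1)
          rw [Polynomial.eval_mul, Polynomial.eval_C, hG0, ← hab, ← mul_assoc,
            inv_mul_cancel₀ ha, one_mul]
      · exact hwr0 j
    · rw [map_sub, aeval_X, Sum.elim_inr, aeval_C]
      show (Polynomial.C (p (Sum.inr j₀)) + if j₀ = j₀ then Polynomial.X else 0)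
        - algebraMap ℂ (Polynomial ℂ) (p (Sum.inr j₀)) = Polynomial.X
      rw [if_pos rfl, Polynomial.algebraMap_eq, add_sub_cancel_left]
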